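/- In the isotropic case Σ = I, if X has singular values λ_1 ≥ … ≥ λ_n > 0 and 0 ≤ ρ with ρλ_1²/d < 1, then T(A(ρ)) = (1/n) Σ_{i=1}^n σ⁴ / ((1 − ρλ_i²/d)² (λ_i²/d + σ²)). -/

import Mathlib

open Matrix

/-- Squared Frobenius norm. -/
noncomputable def frobSq {m k : ℕ} (A : Matrix (Fin m) (Fin k) ℝ) : ℝ :=
  Matrix.trace (Aᵀ * A)

/-- The dual-optimal linear estimator matrix `A(ρ)` in the isotropic case `Σ = I`. -/
noncomputable def AdualIso (n d : ℕ) (X : Matrix (Fin n) (Fin d) ℝ)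
    (σ ρ : ℝ) : Matrix (Fin d) (Fin n) ℝ :=
  ((1 : Matrix (Fin d) (Fin d) ℝ)
      - (ρ * σ ^ 2) • ((1 : Matrix (Fin d) (Fin d) ℝ) - (ρ / (d : ℝ)) • (Xᵀ * X))⁻¹)
    * (Xᵀ * X + ((d : ℝ) * σ ^ 2) • 1)⁻¹ * Xᵀ

/-- Training error functional `T(A) = (1/(nd))‖XAX − X‖_F² + (σ²/n)‖XA − I‖_F²`. -/
noncomputable def trainErr (n d : ℕ) (X : Matrix (Fin n) (Fin d) ℝ)
    (σ : ℝ) (A : Matrix (Fin d) (Fin n) ℝ) : ℝ :=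
  (1 / ((n : ℝ) * (d : ℝ))) * frobSq (X * A * X - X) + (σ ^ 2 / (n : ℝ)) * frobSq (X * A - 1)

set_option maxHeartbeats 1000000 in
/-- In the isotropic case, with singular values `λ₁ ≥ … ≥ λₙ > 0` of `X` and
`ρ λ₁²/d < 1`, `T(A(ρ)) = (1/n) ∑ᵢ σ⁴ / ((1 − ρλᵢ²/d)² (λᵢ²/d + σ²))`. -/
theorem stmt7 (n d : ℕ) (hn : 0 < n) (hnd : n ≤ d) (hd : 0 < d)
    (X : Matrix (Fin n) (Fin d) ℝ)
    (σ ρ : ℝ) (hσ : 0 < σ) (hρ : 0 ≤ ρ)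
    (l : Fin n → ℝ) (hlpos : ∀ i, 0 < l i) (hlmono : Antitone l)
    (U : Matrix (Fin n) (Fin n) ℝ) (hU : U * Uᵀ = 1 ∧ Uᵀ * U = 1)
    (hsvd : X * Xᵀ = U * Matrix.diagonal (fun i => (l i) ^ 2) * Uᵀ)
    (hedge : ρ * (l ⟨0, hn⟩) ^ 2 / (d : ℝ) < 1) :
    trainErr n d X σ (AdualIso n d X σ ρ)
      = (1 / (n : ℝ)) * ∑ i, σ ^ 4 /
          ((1 - ρ * (l i) ^ 2 / (d : ℝ)) ^ 2 * ((l i) ^ 2 / (d : ℝ) + σ ^ 2)) := by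
  classical
  obtain ⟨hU1, hU2⟩ := hU
  have hd0 : (0:ℝ) < (d:ℝ) := by exact_mod_cast hd
  have hn0 : (0:ℝ) < (n:ℝ) := by exact_mod_cast hn
  set c : ℝ := ρ / (d:ℝ) with hc
  set s : ℝ := ρ * σ ^ 2 with hs
  set t : ℝ := (d:ℝ) * σ ^ 2 with ht
  have ht0 : (0:ℝ) < t := by rw [ht]; positivity
  -- scalar data
  have hm0 : ∀ i, 0 < 1 - c * l i ^ 2 := by
    intro i
    have h1 : l i ≤ l ⟨0, hn⟩ := hlmono (by simp [Fin.le_def])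
    have h2 : l i ^ 2 ≤ l ⟨0, hn⟩ ^ 2 := by
      have := (hlpos i).le
      nlinarith
    have h3 : c * l i ^ 2 ≤ ρ * l ⟨0, hn⟩ ^ 2 / (d:ℝ) := by
      rw [hc, div_mul_eq_mul_div]
      gcongr
    linarith
  set m : Fin n → ℝ := fun i => 1 - c * l i ^ 2 with hmdef
  set ν : Fin n → ℝ := fun i => l i ^ 2 + t with hνdef
  have hmne : ∀ i, m i ≠ 0 := fun i => (hm0 i).ne'
  have hν0 : ∀ i, 0 < ν i := fun i => by
    have := hlpos i; simp only [hνdef]; nlinarith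
  have hνne : ∀ i, ν i ≠ 0 := fun i => (hν0 i).ne'
  -- the conjugation gadget
  set C : (Fin n → ℝ) → Matrix (Fin n) (Fin n) ℝ :=
    fun h => U * Matrix.diagonal h * Uᵀ with hCdef
  have hCmul : ∀ h1 h2, C h1 * C h2 = C (fun i => h1 i * h2 i) := by
    intro h1 h2
    simp only [hCdef]
    have : Matrix.diagonal h1 * (Uᵀ * (U * (Matrix.diagonal h2 * Uᵀ)))
        = Matrix.diagonal (fun i => h1 i * h2 i) * Uᵀ := by
      rw [← Matrix.mul_assoc Uᵀ U, hU2, Matrix.one_mul, ← Matrix.mul_assoc,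
        Matrix.diagonal_mul_diagonal]
    simp only [Matrix.mul_assoc, this]
  have hCone : C (fun _ => 1) = 1 := by
    simp only [hCdef]
    rw [show (Matrix.diagonal (fun _ : Fin n => (1:ℝ))) = 1 from Matrix.diagonal_one,
      Matrix.mul_one, hU1]
  have htrace : ∀ h, Matrix.trace (C h) = ∑ i, h i := by
    intro h
    simp only [hCdef]
    rw [Matrix.trace_mul_comm, ← Matrix.mul_assoc, hU2, Matrix.one_mul,
      Matrix.trace_diagonal]
  have hUdet : U.det * Uᵀ.det = 1 := by rw [← Matrix.det_mul, hU1, Matrix.det_one]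
  have hCdet : ∀ h, (C h).det = ∏ i, h i := by
    intro h
    simp only [hCdef]
    rw [Matrix.det_mul, Matrix.det_mul, Matrix.det_diagonal]
    calc U.det * (∏ i, h i) * Uᵀ.det = (U.det * Uᵀ.det) * ∏ i, h i := by ring
      _ = ∏ i, h i := by rw [hUdet, one_mul]
  have hCinv : ∀ h, (∀ i, h i ≠ 0) → (C h)⁻¹ = C (fun i => (h i)⁻¹) := by
    intro h hh
    apply Matrix.inv_eq_right_inv
    rw [hCmul]
    rw [show (fun i => h i * (h i)⁻¹) = fun _ : Fin n => (1:ℝ) from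
      funext fun i => mul_inv_cancel₀ (hh i)]
    exact hCone
  have hCtrans : ∀ h, (C h)ᵀ = C h := by
    intro h
    simp only [hCdef, Matrix.transpose_mul, Matrix.diagonal_transpose,
      Matrix.transpose_transpose, Matrix.mul_assoc]
  have hCsmul : ∀ (a : ℝ) h, a • C h = C (fun i => a * h i) := by
    intro a h
    simp only [hCdef]
    rw [← Matrix.smul_mul, ← Matrix.mul_smul, ← Matrix.diagonal_smul]
    rfl
  have hCsub : ∀ h1 h2, C h1 - C h2 = C (fun i => h1 i - h2 i) := by
    intro h1 h2
    simp only [hCdef]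
    rw [← Matrix.sub_mul, ← Matrix.mul_sub, Matrix.diagonal_sub]
  have hCadd : ∀ h1 h2, C h1 + C h2 = C (fun i => h1 i + h2 i) := by
    intro h1 h2
    simp only [hCdef]
    rw [← Matrix.add_mul, ← Matrix.mul_add, Matrix.diagonal_add]
  -- matrices
  set G : Matrix (Fin n) (Fin n) ℝ := X * Xᵀ with hGdef
  have hG : G = C (fun i => l i ^ 2) := hsvd
  set Mn : Matrix (Fin n) (Fin n) ℝ := 1 - c • G with hMndef
  set Nn : Matrix (Fin n) (Fin n) ℝ := G + t • 1 with hNndef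
  have hMnC : Mn = C m := by
    rw [hMndef, hG, hCsmul c (fun i => l i ^ 2), ← hCone, hCsub, hmdef]
  have hNnC : Nn = C ν := by
    rw [hNndef, hG, ← hCone, hCsmul t (fun _ => 1), hCadd, hνdef]
    congr 1
    funext i
    simp [ht, mul_comm]
  have hMndet : Mn.det ≠ 0 := by
    rw [hMnC, hCdet]
    exact Finset.prod_ne_zero_iff.mpr fun i _ => hmne i
  have hNndet : Nn.det ≠ 0 := by
    rw [hNnC, hCdet]
    exact Finset.prod_ne_zero_iff.mpr fun i _ => hνne i
  set Md : Matrix (Fin d) (Fin d) ℝ := 1 - c • (Xᵀ * X) with hMddef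
  set Nd : Matrix (Fin d) (Fin d) ℝ := Xᵀ * X + t • 1 with hNddef
  have hMddet : Md.det ≠ 0 := by
    have h1 : Md = 1 - Xᵀ * (c • X) := by
      rw [hMddef, Matrix.mul_smul]
    have h2 : Md.det = Mn.det := by
      rw [h1, Matrix.det_one_sub_mul_comm, Matrix.smul_mul, hMndef, hGdef]
    rw [h2]; exact hMndet
  have hNddet : Nd.det ≠ 0 := by
    have h1 : Nd = t • (1 + Xᵀ * (t⁻¹ • X)) := by
      rw [hNddef, Matrix.mul_smul, smul_add, smul_smul, mul_inv_cancel₀ ht0.ne',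
        one_smul]
      abel
    have h2 : (1 + (t⁻¹ • X) * Xᵀ : Matrix (Fin n) (Fin n) ℝ) = t⁻¹ • Nn := by
      rw [hNndef, smul_add, smul_smul, inv_mul_cancel₀ ht0.ne', one_smul,
        Matrix.smul_mul, hGdef]
      abel
    rw [h1, Matrix.det_smul, Matrix.det_one_add_mul_comm, h2, Matrix.det_smul]
    have := hNndet
    positivity
  -- commutation
  have hXMd : X * Md = Mn * X := by
    rw [hMddef, hMndef, hGdef, Matrix.mul_sub, Matrix.sub_mul, Matrix.mul_one,
      Matrix.one_mul, Matrix.mul_smul, Matrix.smul_mul, Matrix.mul_assoc]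
  have hNdX : Nd * Xᵀ = Xᵀ * Nn := by
    rw [hNddef, hNndef, hGdef, Matrix.add_mul, Matrix.mul_add, Matrix.smul_mul,
      Matrix.mul_smul, Matrix.mul_one, Matrix.one_mul, Matrix.mul_assoc]
  have hMdinv : X * Md⁻¹ = Mn⁻¹ * X := by
    have h1 : Mn⁻¹ * Mn = 1 := Matrix.nonsing_inv_mul _ (isUnit_iff_ne_zero.mpr hMndet)
    have h2 : Md * Md⁻¹ = 1 := Matrix.mul_nonsing_inv _ (isUnit_iff_ne_zero.mpr hMddet)
    calc X * Md⁻¹ = (Mn⁻¹ * Mn) * (X * Md⁻¹) := by rw [h1, Matrix.one_mul]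
      _ = Mn⁻¹ * ((Mn * X) * Md⁻¹) := by simp only [Matrix.mul_assoc]
      _ = Mn⁻¹ * ((X * Md) * Md⁻¹) := by rw [hXMd]
      _ = Mn⁻¹ * (X * (Md * Md⁻¹)) := by simp only [Matrix.mul_assoc]
      _ = Mn⁻¹ * X := by rw [h2, Matrix.mul_one]
  have hNdinv : Nd⁻¹ * Xᵀ = Xᵀ * Nn⁻¹ := by
    have h1 : Nd⁻¹ * Nd = 1 := Matrix.nonsing_inv_mul _ (isUnit_iff_ne_zero.mpr hNddet)
    have h2 : Nn * Nn⁻¹ = 1 := Matrix.mul_nonsing_inv _ (isUnit_iff_ne_zero.mpr hNndet)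
    calc Nd⁻¹ * Xᵀ = (Nd⁻¹ * Xᵀ) * (Nn * Nn⁻¹) := by rw [h2, Matrix.mul_one]
      _ = Nd⁻¹ * ((Xᵀ * Nn) * Nn⁻¹) := by simp only [Matrix.mul_assoc]
      _ = Nd⁻¹ * ((Nd * Xᵀ) * Nn⁻¹) := by rw [hNdX]
      _ = (Nd⁻¹ * Nd) * (Xᵀ * Nn⁻¹) := by simp only [Matrix.mul_assoc]
      _ = Xᵀ * Nn⁻¹ := by rw [h1, Matrix.one_mul]
  -- compute X * A
  set f : Fin n → ℝ := fun i => (1 - s * (m i)⁻¹) * (l i ^ 2 * (ν i)⁻¹) with hfdef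
  have hXA : X * AdualIso n d X σ ρ = C f := by
    have hA : AdualIso n d X σ ρ = (1 - s • Md⁻¹) * Nd⁻¹ * Xᵀ := by
      rw [AdualIso, hMddef, hNddef, hs, ht]
    rw [hA]
    calc X * ((1 - s • Md⁻¹) * Nd⁻¹ * Xᵀ)
        = (X * (1 - s • Md⁻¹)) * (Nd⁻¹ * Xᵀ) := by simp only [Matrix.mul_assoc]
      _ = ((1 - s • Mn⁻¹) * X) * (Xᵀ * Nn⁻¹) := by
          have hx : X * (1 - s • Md⁻¹) = (1 - s • Mn⁻¹) * X := by
            rw [Matrix.mul_sub, Matrix.sub_mul, Matrix.mul_one, Matrix.one_mul,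
              Matrix.mul_smul, Matrix.smul_mul, hMdinv]
          rw [hNdinv, hx]
      _ = (1 - s • Mn⁻¹) * (G * Nn⁻¹) := by
          simp only [Matrix.mul_assoc, hGdef]
      _ = C f := by
          rw [hMnC, hNnC, hG, hCinv m hmne, hCinv ν hνne]
          rw [hCmul]
          have h1 : (1 : Matrix (Fin n) (Fin n) ℝ) - s • C (fun i => (m i)⁻¹)
              = C (fun i => 1 - s * (m i)⁻¹) := by
            rw [hCsmul s (fun i => (m i)⁻¹), ← hCone, hCsub]
          rw [h1, hCmul, hfdef]
  set g : Fin n → ℝ := fun i => -(t / (m i * ν i)) with hgdef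
  have hfg : (fun i => f i - 1) = g := by
    funext i
    have hmi : 1 - ρ / (d:ℝ) * l i ^ 2 ≠ 0 := hmne i
    have hνi : l i ^ 2 + (d:ℝ) * σ ^ 2 ≠ 0 := hνne i
    rw [hfdef, hgdef, hνdef, hmdef, hs, hc, ht]
    simp only
    have hmi2 : (0:ℝ) < (d:ℝ) - ρ * l i ^ 2 := by
      have h := hm0 i
      have h2 : (d:ℝ) * (1 - c * l i ^ 2) = (d:ℝ) - ρ * l i ^ 2 := by
        rw [hc]; field_simp
      rw [← h2]; exact mul_pos hd0 h
    have hmi3 : (-(ρ * l i ^ 2) + (d:ℝ)) ≠ 0 := by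
      have : -(ρ * l i ^ 2) + (d:ℝ) = (d:ℝ) - ρ * l i ^ 2 := by ring
      rw [this]; exact hmi2.ne'
    rw [← neg_div, eq_div_iff (mul_ne_zero hmi hνi)]
    field_simp [hmi3]
    ring
  have hXAg : X * AdualIso n d X σ ρ - 1 = C g := by
    rw [hXA, ← hCone, hCsub, hfg]
  -- the two Frobenius terms
  have hT2 : frobSq (X * AdualIso n d X σ ρ - 1) = ∑ i, g i * g i := by
    rw [frobSq, hXAg, hCtrans, hCmul, htrace]
  have hT1 : frobSq (X * AdualIso n d X σ ρ * X - X) = ∑ i, g i * g i * l i ^ 2 := by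
    have hXX : X * AdualIso n d X σ ρ * X - X = C g * X := by
      rw [Matrix.sub_mul] at *
      rw [show C g * X = (X * AdualIso n d X σ ρ - 1) * X by
        rw [hXAg], Matrix.sub_mul, Matrix.one_mul]
    rw [frobSq, hXX, Matrix.transpose_mul, hCtrans]
    rw [show Xᵀ * C g * (C g * X) = (Xᵀ * (C g * C g)) * X by
      simp only [Matrix.mul_assoc]]
    rw [Matrix.trace_mul_comm, ← Matrix.mul_assoc, ← hGdef, hG, hCmul, hCmul, htrace]
    apply Finset.sum_congr rfl
    intro i _
    ring
  -- finish
  rw [trainErr, hT1, hT2, Finset.mul_sum, Finset.mul_sum, Finset.mul_sum,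
    ← Finset.sum_add_distrib]
  apply Finset.sum_congr rfl
  intro i _
  have hgi : g i = -(t / (m i * ν i)) := by rw [hgdef]
  have hmi : m i = 1 - ρ * l i ^ 2 / (d:ℝ) := by rw [hmdef]; simp only; rw [hc]; ring
  have hνi : ν i = l i ^ 2 + t := rfl
  have hde : ((l i) ^ 2 / (d : ℝ) + σ ^ 2) ≠ 0 := by positivity
  have hm1 : (1 - ρ * l i ^ 2 / (d:ℝ)) ≠ 0 := by rw [← hmi]; exact hmne i
  have hν1 : (l i ^ 2 + (d:ℝ) * σ ^ 2) ≠ 0 := hνne i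
  have hmi2 : (0:ℝ) < (d:ℝ) - ρ * l i ^ 2 := by
    have h := hm0 i
    have h2 : (d:ℝ) * (1 - c * l i ^ 2) = (d:ℝ) - ρ * l i ^ 2 := by
      rw [hc]; field_simp
    rw [← h2]; exact mul_pos hd0 h
  have hmi3 : (-(ρ * l i ^ 2) + (d:ℝ)) ≠ 0 := by
    have : -(ρ * l i ^ 2) + (d:ℝ) = (d:ℝ) - ρ * l i ^ 2 := by ring
    rw [this]; exact hmi2.ne'
  rw [hgi, hmi, hνi, ht]
  field_simp [hmi3]
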